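/- For any z₀ in the upper half plane ℍ and any γ ∈ SL₂(ℝ) with ‖γ‖ = max of absolute values of entries, the hyperbolic distance satisfies d(z₀, γ z₀) ≤ 2 log ‖γ‖ + 3 log 2 + 2 d(z₀, i). -/

import Mathlib

open UpperHalfPlane

lemma aux_cosh_dist (γ : Matrix.SpecialLinearGroup (Fin 2) ℝ) :
    Real.cosh (dist UpperHalfPlane.I (γ • UpperHalfPlane.I)) =
      ((γ 0 0)^2 + (γ 0 1)^2 + (γ 1 0)^2 + (γ 1 1)^2) / 2 := by
  set a := γ 0 0; set b := γ 0 1; set c := γ 1 0; set d := γ 1 1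
  have hdet : a * d - b * c = 1 := by
    have := γ.prop
    rw [Matrix.det_fin_two] at this
    linarith [this]
  have hkey : 1 ≤ (a^2 + b^2) * (c^2 + d^2) := by
    nlinarith [sq_nonneg (a*c + b*d), hdet]
  have hcd : (0:ℝ) < c^2 + d^2 := by
    nlinarith [sq_nonneg a, sq_nonneg b]
  have hden : (c * Complex.I + d) ≠ 0 := by
    intro h
    have hc : (c:ℝ) = 0 := by have := congrArg Complex.im h; simpa using this
    have hd : (d:ℝ) = 0 := by have := congrArg Complex.re h; simpa using this
    nlinarith
  have hcoe : ((γ • UpperHalfPlane.I : UpperHalfPlane) : ℂ)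
      = (a * Complex.I + b) / (c * Complex.I + d) := by
    rw [UpperHalfPlane.specialLinearGroup_apply]
    simp [UpperHalfPlane.coe_I, UpperHalfPlane.coe_mk]
    rfl
  have h2 : Complex.normSq (c * Complex.I + d) = c^2 + d^2 := by
    simp [Complex.normSq_apply]; ring
  have him : (γ • UpperHalfPlane.I : UpperHalfPlane).im = 1 / (c^2 + d^2) := by
    rw [← UpperHalfPlane.coe_im, hcoe, Complex.div_im, h2]
    simp
    field_simp
    linarith [hdet]
  rw [UpperHalfPlane.cosh_dist, Complex.dist_eq, Complex.sq_norm]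
  rw [him, hcoe, UpperHalfPlane.coe_I, UpperHalfPlane.I_im]
  have hsub : Complex.I - (a * Complex.I + b) / (c * Complex.I + d)
      = (Complex.I * (c * Complex.I + d) - (a * Complex.I + b)) / (c * Complex.I + d) := by
    rw [sub_div, mul_div_cancel_right₀ _ hden]
  rw [hsub, Complex.normSq_div]
  have h1 : Complex.normSq (Complex.I * (c * Complex.I + d) - (a * Complex.I + b))
      = (b + c)^2 + (a - d)^2 := by
    simp [Complex.normSq_apply]; ring
  rw [h1, h2]
  field_simp
  nlinarith [hdet]

lemma aux_dist_I_le (γ : Matrix.SpecialLinearGroup (Fin 2) ℝ) :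
    dist UpperHalfPlane.I (γ • UpperHalfPlane.I) ≤
      2 * Real.log (max (max |γ 0 0| |γ 0 1|) (max |γ 1 0| |γ 1 1|)) + 3 * Real.log 2 := by
  set a := γ 0 0; set b := γ 0 1; set c := γ 1 0; set d := γ 1 1
  set M := max (max |a| |b|) (max |c| |d|) with hM
  have hdet : a * d - b * c = 1 := by
    have := γ.prop
    rw [Matrix.det_fin_two] at this
    linarith [this]
  have haM : |a| ≤ M := le_trans (le_max_left _ _) (le_max_left _ _)
  have hbM : |b| ≤ M := le_trans (le_max_right _ _) (le_max_left _ _)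
  have hcM : |c| ≤ M := le_trans (le_max_left _ _) (le_max_right _ _)
  have hdM : |d| ≤ M := le_trans (le_max_right _ _) (le_max_right _ _)
  have hM0 : 0 < M := by
    rcases lt_or_ge 0 M with h | h
    · exact h
    · exfalso
      have ha : a = 0 := abs_eq_zero.mp (le_antisymm (haM.trans h) (abs_nonneg _))
      have hb : b = 0 := abs_eq_zero.mp (le_antisymm (hbM.trans h) (abs_nonneg _))
      simp [ha, hb] at hdet
  have hS : a^2 + b^2 + c^2 + d^2 ≤ 4 * M^2 := by
    have := sq_abs a; have := sq_abs b; have := sq_abs c; have := sq_abs d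
    nlinarith [abs_nonneg a, abs_nonneg b, abs_nonneg c, abs_nonneg d]
  set B := 2 * Real.log M + 3 * Real.log 2 with hB
  have hexp : Real.exp B = M^2 * 8 := by
    rw [hB, Real.exp_add]
    rw [show (2:ℝ) * Real.log M = Real.log (M^2) by rw [Real.log_pow]; push_cast; ring]
    rw [show (3:ℝ) * Real.log 2 = Real.log (2^3) by rw [Real.log_pow]; push_cast; ring]
    rw [Real.exp_log (by positivity), Real.exp_log (by norm_num)]
    norm_num
  have hcoshB : 4 * M^2 ≤ Real.cosh B := by
    have h1 : Real.exp B / 2 ≤ Real.cosh B := by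
      rw [Real.cosh_eq]
      have := Real.exp_pos (-B)
      linarith
    rw [hexp] at h1
    linarith
  have hcosh : Real.cosh (dist UpperHalfPlane.I (γ • UpperHalfPlane.I)) ≤ Real.cosh B := by
    rw [aux_cosh_dist]
    have : a^2 + b^2 + c^2 + d^2 ≥ 2 := by nlinarith [sq_nonneg (a - d), sq_nonneg (b + c)]
    linarith
  have hB0 : 0 ≤ B := by
    have hS2 : (2:ℝ) ≤ a^2 + b^2 + c^2 + d^2 := by
      nlinarith [sq_nonneg (a - d), sq_nonneg (b + c)]
    have h1 : (1:ℝ) ≤ Real.exp B := by rw [hexp]; nlinarith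
    by_contra h
    push_neg at h
    have := Real.exp_lt_one_iff.mpr h
    linarith
  have := Real.cosh_le_cosh.mp hcosh
  rw [abs_of_nonneg dist_nonneg, abs_of_nonneg hB0] at this
  exact this

theorem dist_smul_point_le (z₀ : UpperHalfPlane) (γ : Matrix.SpecialLinearGroup (Fin 2) ℝ) :
    dist z₀ (γ • z₀) ≤
      2 * Real.log (max (max |γ 0 0| |γ 0 1|) (max |γ 1 0| |γ 1 1|)) + 3 * Real.log 2 +
        2 * dist z₀ UpperHalfPlane.I := by
  have h1 : dist z₀ (γ • z₀) ≤ dist z₀ UpperHalfPlane.I + dist UpperHalfPlane.I (γ • UpperHalfPlane.I)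
      + dist (γ • UpperHalfPlane.I) (γ • z₀) := dist_triangle4 _ _ _ _
  have h2 : dist (γ • UpperHalfPlane.I : UpperHalfPlane) (γ • z₀) = dist UpperHalfPlane.I z₀ :=
    dist_smul γ _ _
  rw [h2, dist_comm UpperHalfPlane.I z₀] at h1
  have := aux_dist_I_le γ
  linarith
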